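/- The support of a stabiliser state is an affine subspace of (Z_2)^n. Precisely, if ψ ∈ C^{2^n} is a nonzero simultaneous (-1)^{λ_j}-eigenvector of commuting Paulis W(p_j,q_j), j=1,...,n, spanning a Lagrangian subspace, then {z ∈ (Z_2)^n : ⟨z|ψ⟩ ≠ 0} equals c + V for some c ∈ (Z_2)^n and some linear subspace V of (Z_2)^n. -/

import Mathlib

open scoped Matrix ComplexConjugate

/-- Bit vectors of length `n` over `ℤ/2`. -/
abbrev V2 (n : ℕ) := Fin n → ZMod 2

/-- Dot product over `ℤ/2`. -/
def dotZ2 {n : ℕ} (a b : V2 n) : ZMod 2 := ∑ i, a i * b i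

/-- The symplectic product on `(ℤ/2)^{2n}`: `[(p₁,q₁),(p₂,q₂)] = p₁·q₂ - p₂·q₁`. -/
def symp {n : ℕ} (x y : V2 n × V2 n) : ZMod 2 := dotZ2 x.1 y.2 - dotZ2 y.1 x.2

/-- The computational basis vector `|z⟩` in `ℂ^{2^n}`. -/
noncomputable def basisVec {n : ℕ} (z : V2 n) : V2 n → ℂ := fun y => if y = z then 1 else 0

/-- The Pauli operator `W(p,q) = (-i)^{p·q mod 4} Z^p X^q`, where
`Z^p X^q |z⟩ = (-1)^{(z+q)·p} |z+q⟩` (bits of `p·q` lifted to integers). -/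
noncomputable def W {n : ℕ} (p q : V2 n) : Matrix (V2 n) (V2 n) ℂ :=
  Matrix.of fun y z =>
    if y = z + q then
      (-Complex.I) ^ ((∑ i, (p i).val * (q i).val) % 4) * (-1 : ℂ) ^ (dotZ2 (z + q) p).val
    else 0
/-- A subspace of `(ℤ/2)^{2n}` is isotropic if the symplectic form vanishes on it. -/
def IsIsotropic {n : ℕ} (L : Submodule (ZMod 2) (V2 n × V2 n)) : Prop :=
  ∀ x ∈ L, ∀ y ∈ L, symp x y = 0

/-- A Lagrangian subspace: a maximal isotropic subspace of `(ℤ/2)^{2n}`. -/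
def IsLagrangian {n : ℕ} (L : Submodule (ZMod 2) (V2 n × V2 n)) : Prop :=
  IsIsotropic L ∧ ∀ L', IsIsotropic L' → L ≤ L' → L' = L

/-! ### Auxiliary machinery -/

noncomputable def chi (a : ZMod 2) : ℂ := (-1 : ℂ) ^ a.val

noncomputable def mu {n : ℕ} (p q : V2 n) : ℂ :=
  (-Complex.I) ^ ((∑ i, (p i).val * (q i).val) % 4)

lemma zmod2_cases (a : ZMod 2) : a = 0 ∨ a = 1 := by revert a; decide

lemma chi_add (a b : ZMod 2) : chi (a + b) = chi a * chi b := by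
  have h2 : (1 : ZMod 2) + 1 = 0 := by decide
  rcases zmod2_cases a with h | h <;> rcases zmod2_cases b with h' | h' <;>
    subst h <;> subst h' <;> simp [chi, ZMod.val_zero, ZMod.val_one, h2]

lemma chi_ne_zero (a : ZMod 2) : chi a ≠ 0 := by
  rcases zmod2_cases a with h | h <;> subst h <;> simp [chi, ZMod.val]

lemma chi_mul_self (a : ZMod 2) : chi a * chi a = 1 := by
  rcases zmod2_cases a with h | h <;> subst h <;> simp [chi, ZMod.val_zero, ZMod.val_one]

lemma chi_inj {a b : ZMod 2} (h : chi a = chi b) : a = b := by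
  rcases zmod2_cases a with h1 | h1 <;> rcases zmod2_cases b with h2 | h2 <;>
    subst h1 <;> subst h2 <;> simp_all [chi, ZMod.val_zero, ZMod.val_one] <;> norm_num at h

lemma dot_add_left {n : ℕ} (a b c : V2 n) : dotZ2 (a + b) c = dotZ2 a c + dotZ2 b c := by
  simp [dotZ2, add_mul, Finset.sum_add_distrib]

lemma dot_add_right {n : ℕ} (a b c : V2 n) : dotZ2 a (b + c) = dotZ2 a b + dotZ2 a c := by
  simp [dotZ2, mul_add, Finset.sum_add_distrib]

lemma dot_comm {n : ℕ} (a b : V2 n) : dotZ2 a b = dotZ2 b a := by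
  simp [dotZ2, mul_comm]

lemma dot_zero_right {n : ℕ} (v : V2 n) : dotZ2 v 0 = 0 := by simp [dotZ2]

lemma dot_zero_left {n : ℕ} (v : V2 n) : dotZ2 0 v = 0 := by simp [dotZ2]

lemma v2_add_self {n : ℕ} (v : V2 n) : v + v = 0 := by
  ext i; exact CharTwo.add_self_eq_zero (v i)

lemma mu_ne_zero {n : ℕ} (p q : V2 n) : mu p q ≠ 0 := by
  apply pow_ne_zero
  simp [Complex.I_ne_zero, neg_ne_zero]

lemma W_mulVec {n : ℕ} (p q : V2 n) (ψ : V2 n → ℂ) (y : V2 n) :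
    (W p q).mulVec ψ y = mu p q * chi (dotZ2 y p) * ψ (y + q) := by
  have h : ∀ z : V2 n, (y = z + q) ↔ (z = y + q) := by
    intro z
    constructor
    · rintro rfl; rw [add_assoc, v2_add_self, add_zero]
    · rintro rfl; rw [add_assoc, v2_add_self, add_zero]
  simp only [Matrix.mulVec, dotProduct, W, Matrix.of_apply]
  rw [Finset.sum_congr rfl (fun z _ => by rw [if_congr (h z) rfl rfl])]
  simp [Finset.sum_ite_eq', mu, chi, add_assoc, v2_add_self]

lemma symp_zero_left {n : ℕ} (x : V2 n × V2 n) : symp 0 x = 0 := by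
  simp [symp, dot_zero_left, dot_zero_right]

lemma symp_zero_right {n : ℕ} (x : V2 n × V2 n) : symp x 0 = 0 := by
  simp [symp, dot_zero_left, dot_zero_right]

lemma symp_add_left {n : ℕ} (x y z : V2 n × V2 n) : symp (x + y) z = symp x z + symp y z := by
  simp only [symp, Prod.fst_add, Prod.snd_add, dot_add_left, dot_add_right]; ring

lemma symp_add_right {n : ℕ} (x y z : V2 n × V2 n) : symp x (y + z) = symp x y + symp x z := by
  simp only [symp, Prod.fst_add, Prod.snd_add, dot_add_left, dot_add_right]; ring

/-- If `a` is dot-orthogonal to all the `q`-parts of a Lagrangian `L`, then `(a,0) ∈ L`. -/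
lemma diag_mem_of_orth {n : ℕ} {L : Submodule (ZMod 2) (V2 n × V2 n)}
    (hLag : IsLagrangian L) (a : V2 n) (ha : ∀ x ∈ L, dotZ2 a x.2 = 0) : (a, 0) ∈ L := by
  set L' : Submodule (ZMod 2) (V2 n × V2 n) := L ⊔ Submodule.span (ZMod 2) {((a, 0) : V2 n × V2 n)}
  have hsym : ∀ x ∈ L, symp (a, 0) x = 0 ∧ symp x (a, 0) = 0 := by
    intro x hx
    constructor
    · simp [symp, ha x hx, dot_zero_right]
    · simp [symp, ha x hx, dot_zero_right, dot_zero_left]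
  have hiso : IsIsotropic L' := by
    intro x hx y hy
    rcases Submodule.mem_sup.mp hx with ⟨x1, hx1, x2, hx2, rfl⟩
    rcases Submodule.mem_sup.mp hy with ⟨y1, hy1, y2, hy2, rfl⟩
    rcases Submodule.mem_span_singleton.mp hx2 with ⟨s, rfl⟩
    rcases Submodule.mem_span_singleton.mp hy2 with ⟨t, rfl⟩
    rw [symp_add_left, symp_add_right, symp_add_right]
    have haa : symp ((a,0) : V2 n × V2 n) (a,0) = 0 := by
      simp [symp, dot_zero_right, dot_zero_left]
    have e1 : symp x1 y1 = 0 := hLag.1 x1 hx1 y1 hy1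
    rcases zmod2_cases s with rfl | rfl <;> rcases zmod2_cases t with rfl | rfl <;>
      simp [e1, (hsym x1 hx1).1, (hsym x1 hx1).2, (hsym y1 hy1).1, (hsym y1 hy1).2, haa,
        symp_zero_left, symp_zero_right]
  have : L' = L := hLag.2 L' hiso le_sup_left
  rw [← this]
  exact Submodule.mem_sup_right (Submodule.mem_span_singleton_self _)

lemma dot_eq_dual {n : ℕ} (φ : Module.Dual (ZMod 2) (V2 n)) (v : V2 n) :
    dotZ2 (fun i => φ (Pi.single i 1)) v = φ v := by
  rw [dotZ2]
  conv_rhs => rw [← Finset.univ_sum_single v]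
  rw [map_sum]
  refine Finset.sum_congr rfl fun i _ => ?_
  rw [mul_comm, ← smul_eq_mul, ← map_smul]
  congr 1
  ext j
  by_cases h : j = i <;> simp [Pi.single_apply, h]

/-- Dual separation: if `d ∉ Q` then some vector is dot-orthogonal to `Q` but not to `d`. -/
lemma exists_orth_vector {n : ℕ} (Q : Submodule (ZMod 2) (V2 n)) (d : V2 n) (hd : d ∉ Q) :
    ∃ a : V2 n, (∀ v ∈ Q, dotZ2 a v = 0) ∧ dotZ2 a d ≠ 0 := by
  have h2 : ¬ ∀ φ ∈ Q.dualAnnihilator, φ d = 0 := fun h =>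
    hd ((Subspace.forall_mem_dualAnnihilator_apply_eq_zero_iff Q d).mp h)
  push_neg at h2
  obtain ⟨φ, hφ, hφd⟩ := h2
  refine ⟨fun i => φ (Pi.single i 1), ?_, ?_⟩
  · intro v hv
    rw [dot_eq_dual]
    exact (Submodule.mem_dualAnnihilator φ).mp hφ v hv
  · rw [dot_eq_dual]; exact hφd

/-- The support of a stabiliser state is an affine subspace `c + V` of `(ℤ/2)^n`. -/
theorem stab_support_affine {n : ℕ} (p q : Fin n → V2 n) (lam : Fin n → ZMod 2)
    (hLag : IsLagrangian (Submodule.span (ZMod 2) (Set.range fun j => (p j, q j))))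
    (ψ : V2 n → ℂ) (hψ : ψ ≠ 0)
    (heig : ∀ j, (W (p j) (q j)).mulVec ψ = ((-1 : ℂ) ^ (lam j).val) • ψ) :
    ∃ (c : V2 n) (V : Submodule (ZMod 2) (V2 n)),
      {z : V2 n | ψ z ≠ 0} = {x : V2 n | ∃ v ∈ V, x = c + v} := by
  classical
  set L : Submodule (ZMod 2) (V2 n × V2 n) :=
    Submodule.span (ZMod 2) (Set.range fun j => (p j, q j)) with hL
  -- the key eigen-property, propagated over the whole of `L`
  have P : ∀ x ∈ L, ∃ c : ℂ, c ≠ 0 ∧ ∀ y, ψ (y + x.2) = c * chi (dotZ2 y x.1) * ψ y := by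
    intro x hx
    induction hx using Submodule.span_induction with
    | mem x hxmem =>
      obtain ⟨j, rfl⟩ := hxmem
      refine ⟨(-1 : ℂ) ^ (lam j).val * (mu (p j) (q j))⁻¹, ?_, ?_⟩
      · exact mul_ne_zero (pow_ne_zero _ (by norm_num)) (inv_ne_zero (mu_ne_zero _ _))
      · intro y
        have h := congrFun (heig j) y
        rw [W_mulVec] at h
        simp only [Pi.smul_apply, smul_eq_mul] at h
        have hmu := mu_ne_zero (p j) (q j)
        have key : ψ (y + q j)
            = (mu (p j) (q j))⁻¹ * chi (dotZ2 y (p j)) * ((-1 : ℂ) ^ (lam j).val * ψ y) := by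
          rw [← h]
          calc ψ (y + q j)
              = ((mu (p j) (q j))⁻¹ * mu (p j) (q j))
                * (chi (dotZ2 y (p j)) * chi (dotZ2 y (p j))) * ψ (y + q j) := by
                rw [inv_mul_cancel₀ hmu, chi_mul_self]; ring
            _ = _ := by ring
        rw [key]; ring
    | zero => exact ⟨1, one_ne_zero, fun y => by simp [dot_zero_right, chi]⟩
    | add x y _ _ ihx ihy =>
      obtain ⟨cx, hcx, hx⟩ := ihx
      obtain ⟨cy, hcy, hy⟩ := ihy
      refine ⟨cx * cy * chi (dotZ2 x.2 y.1), by
        exact mul_ne_zero (mul_ne_zero hcx hcy) (chi_ne_zero _), fun z => ?_⟩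
      have h1 : z + (x + y).2 = (z + x.2) + y.2 := by
        simp [Prod.snd_add, add_assoc]
      rw [h1, hy (z + x.2), hx z, dot_add_left, chi_add, Prod.fst_add, dot_add_right, chi_add]
      ring
    | smul a x _ ihx =>
      rcases zmod2_cases a with rfl | rfl
      · exact ⟨1, one_ne_zero, fun y => by simp [dot_zero_right, chi]⟩
      · simpa using ihx
  -- support is invariant under translation by the q-part of any element of L
  have supp_trans : ∀ x ∈ L, ∀ y, ψ y ≠ 0 ↔ ψ (y + x.2) ≠ 0 := by
    intro x hx y
    obtain ⟨c, hc, hform⟩ := P x hx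
    rw [hform y]
    constructor
    · intro h
      exact mul_ne_zero (mul_ne_zero hc (chi_ne_zero _)) h
    · intro h h0
      exact h (by rw [h0, mul_zero])
  -- a point in the support
  obtain ⟨z₀, hz₀⟩ : ∃ z₀, ψ z₀ ≠ 0 := Function.ne_iff.mp hψ
  -- the q-part projection of L
  set Q : Submodule (ZMod 2) (V2 n) := L.map (LinearMap.snd (ZMod 2) (V2 n) (V2 n)) with hQ
  refine ⟨z₀, Q, ?_⟩
  ext z
  simp only [Set.mem_setOf_eq]
  constructor
  · intro hz
    refine ⟨z₀ + z, ?_, by rw [← add_assoc, v2_add_self, zero_add]⟩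
    by_contra hnot
    obtain ⟨a, haQ, had⟩ := exists_orth_vector Q (z₀ + z) hnot
    have haL : ((a, 0) : V2 n × V2 n) ∈ L := by
      apply diag_mem_of_orth hLag
      intro x hx
      exact haQ x.2 ⟨x, hx, rfl⟩
    obtain ⟨c, hc, hform⟩ := P (a, 0) haL
    have e1 := hform z₀
    have e2 := hform z
    simp only [add_zero] at e1 e2
    have key : ∀ w : V2 n, ψ w ≠ 0 → (ψ w = c * chi (dotZ2 w a) * ψ w) → c * chi (dotZ2 w a) = 1 := by
      intro w hw he
      have : (c * chi (dotZ2 w a) - 1) * ψ w = 0 := by rw [sub_mul, ← he, one_mul, sub_self]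
      rcases mul_eq_zero.mp this with h | h
      · exact sub_eq_zero.mp h
      · exact absurd h hw
    have k1 := key z₀ hz₀ e1
    have k2 := key z hz e2
    have hchieq : chi (dotZ2 z₀ a) = chi (dotZ2 z a) := by
      have : c * chi (dotZ2 z₀ a) = c * chi (dotZ2 z a) := by rw [k1, k2]
      exact mul_left_cancel₀ hc this
    have : dotZ2 z₀ a = dotZ2 z a := chi_inj hchieq
    apply had
    rw [dot_comm, dot_add_left, this, ← dot_add_left, v2_add_self z, dot_zero_left]
  · rintro ⟨v, hv, rfl⟩
    obtain ⟨x, hxL, hx2⟩ := hv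
    rw [← hx2]
    exact (supp_trans x hxL z₀).mp hz₀
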